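/- For every integer n ≥ 0, the number of abelian squares of length 2n over a 4-letter alphabet equals f_4(n) = Σ_{0≤i≤n} C(n,i)^2 · C(2i, i) · C(2n−2i, n−i). -/

import Mathlib

/-- `abelianSquares k n` is the number of abelian squares of length `2n` over a
`k`-letter alphabet: pairs `(x, x')` of words of length `n` over `Fin k` such that
for each letter `a`, the number of occurrences of `a` in `x` equals the number of
occurrences of `a` in `x'`. -/
def abelianSquares (k n : ℕ) : ℕ :=
  Fintype.card {p : (Fin n → Fin k) × (Fin n → Fin k) //
    ∀ a : Fin k,
      (Finset.univ.filter fun i => p.1 i = a).card =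
      (Finset.univ.filter fun i => p.2 i = a).card}


open Finset

set_option linter.unusedSectionVars false

attribute [local instance 2000] Fintype.decidableForallFintype

lemma card_irrel {α : Type*} (i1 i2 : Fintype α) :
    @Fintype.card α i1 = @Fintype.card α i2 := by
  congr 1
  exact Subsingleton.elim _ _

lemma pairsum (n : ℕ) (g : ℕ → ℕ) :
    ∑ q : Finset (Fin n) × Finset (Fin n),
      (if q.1.card = q.2.card then g q.1.card else 0)
    = ∑ i ∈ Finset.range (n + 1), n.choose i * (n.choose i * g i) := by
  have key : ∀ F : Finset (Fin n) → ℕ,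
      ∑ S : Finset (Fin n), F S
        = ∑ i ∈ Finset.range (n + 1), ∑ S ∈ Finset.powersetCard i Finset.univ, F S := by
    intro F
    rw [← Finset.powerset_univ, Finset.sum_powerset, Finset.card_univ, Fintype.card_fin]
  rw [Fintype.sum_prod_type, key]
  refine Finset.sum_congr rfl fun i hi => ?_
  have step : ∀ S₁ ∈ Finset.powersetCard i (Finset.univ : Finset (Fin n)),
      (∑ S₂ : Finset (Fin n), if S₁.card = S₂.card then g S₁.card else 0)
        = n.choose i * g i := by
    intro S₁ hS₁
    have hc1 : S₁.card = i := (Finset.mem_powersetCard.1 hS₁).2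
    simp only [hc1]
    rw [key]
    have : ∀ j ∈ Finset.range (n + 1),
        (∑ S₂ ∈ Finset.powersetCard j (Finset.univ : Finset (Fin n)),
          if i = S₂.card then g i else 0)
          = if i = j then n.choose j * g i else 0 := by
      intro j hj
      rw [Finset.sum_congr rfl fun S₂ hS₂ => by rw [(Finset.mem_powersetCard.1 hS₂).2],
        Finset.sum_const, Finset.card_powersetCard, Finset.card_univ, Fintype.card_fin,
        smul_eq_mul, mul_ite, mul_zero]
    rw [Finset.sum_congr rfl this, Finset.sum_ite_eq]
    simp [Finset.mem_range.1 hi]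
  rw [Finset.sum_congr rfl step, Finset.sum_const, Finset.card_powersetCard, Finset.card_univ,
    Fintype.card_fin, smul_eq_mul]

lemma vandermonde_sq (m : ℕ) :
    ∑ i ∈ Finset.range (m + 1), m.choose i * (m.choose i * 1) = (2 * m).choose m := by
  rw [two_mul, Nat.add_choose_eq, Finset.Nat.sum_antidiagonal_eq_sum_range_succ_mk]
  refine (Finset.sum_congr rfl fun i hi => ?_).symm
  simp only [mul_one]
  congr 1
  exact Nat.choose_symm (by have := Finset.mem_range.1 hi; omega : i ≤ m)


variable {ι ι' ι₁ ι₂ ι₁' ι₂' κ κ' : Type*}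

def cnt [Fintype ι] [DecidableEq κ] (x : ι → κ) (a : κ) : ℕ :=
  (Finset.univ.filter fun i => x i = a).card

lemma cnt_eq_card [Fintype ι] [DecidableEq κ] (x : ι → κ) (a : κ) :
    cnt x a = Fintype.card {i // x i = a} :=
  (Fintype.card_subtype _).symm

lemma sum_cnt [Fintype ι] [Fintype κ] [DecidableEq κ] (x : ι → κ) :
    ∑ a : κ, cnt x a = Fintype.card ι := by
  classical
  rw [Fintype.card, Finset.card_eq_sum_card_fiberwise (f := x) (t := univ) (fun i _ => mem_univ _)]
  rfl

abbrev ASet (ι₁ ι₂ κ : Type*) [Fintype ι₁] [Fintype ι₂] [DecidableEq κ] :=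
  {p : (ι₁ → κ) × (ι₂ → κ) // ∀ a, cnt p.1 a = cnt p.2 a}

lemma cnt_comp_equiv [Fintype ι] [Fintype ι'] [DecidableEq κ]
    (e : ι' ≃ ι) (x : ι → κ) (a : κ) : cnt (x ∘ e) a = cnt x a := by
  rw [cnt_eq_card, cnt_eq_card]
  exact Fintype.card_congr (e.subtypeEquiv fun i => Iff.rfl)

lemma cnt_map_equiv [Fintype ι] [DecidableEq κ] [DecidableEq κ']
    (f : κ ≃ κ') (x : ι → κ) (b : κ') : cnt (f ∘ x) b = cnt x (f.symm b) := by
  unfold cnt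
  congr 1
  apply Finset.filter_congr
  intro i _
  simp [Equiv.apply_eq_iff_eq_symm_apply]

lemma cnt_arrow [Fintype ι] [Fintype ι'] [DecidableEq κ] [DecidableEq κ']
    (e : ι ≃ ι') (f : κ ≃ κ') (x : ι → κ) (b : κ') :
    cnt ((e.arrowCongr f) x) b = cnt x (f.symm b) := by
  rw [show ((e.arrowCongr f) x) = (f ∘ x) ∘ e.symm from rfl, cnt_comp_equiv, cnt_map_equiv]

lemma AS_congr [Fintype ι₁] [Fintype ι₂] [Fintype ι₁'] [Fintype ι₂']
    [DecidableEq ι₁] [DecidableEq ι₂] [DecidableEq ι₁'] [DecidableEq ι₂']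
    [Fintype κ] [Fintype κ'] [DecidableEq κ] [DecidableEq κ']
    (e₁ : ι₁ ≃ ι₁') (e₂ : ι₂ ≃ ι₂') (f : κ ≃ κ') :
    Fintype.card (ASet ι₁ ι₂ κ) = Fintype.card (ASet ι₁' ι₂' κ') := by
  apply Fintype.card_congr
  apply Equiv.subtypeEquiv ((Equiv.arrowCongr e₁ f).prodCongr (Equiv.arrowCongr e₂ f))
  intro p
  simp only [Equiv.prodCongr_apply, Prod.map_fst, Prod.map_snd]
  constructor
  · intro h b
    rw [cnt_arrow, cnt_arrow, h]
  · intro h a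
    have := h (f a)
    rw [cnt_arrow, cnt_arrow, Equiv.symm_apply_apply] at this
    exact this

lemma AS_eq_zero [Fintype ι₁] [Fintype ι₂] [DecidableEq ι₁] [DecidableEq ι₂]
    [Fintype κ] [DecidableEq κ]
    (h : Fintype.card ι₁ ≠ Fintype.card ι₂) :
    Fintype.card (ASet ι₁ ι₂ κ) = 0 := by
  rw [Fintype.card_eq_zero_iff]
  constructor
  rintro ⟨⟨x, y⟩, hc⟩
  apply h
  rw [← sum_cnt x, ← sum_cnt y]
  exact Finset.sum_congr rfl fun a _ => hc a

lemma fin2_cases (v : Fin 2) : v = 0 ∨ v = 1 := by omega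

def wordTwoEquiv (m : ℕ) : (Fin m → Fin 2) ≃ Finset (Fin m) where
  toFun x := Finset.univ.filter fun i => x i = 0
  invFun S := fun i => if i ∈ S then 0 else 1
  left_inv x := by
    funext i
    rcases fin2_cases (x i) with h | h <;> simp [h]
  right_inv S := by
    ext i
    simp

lemma cnt_one (m : ℕ) (x : Fin m → Fin 2) : cnt x 0 + cnt x 1 = m := by
  have h := Finset.card_filter_add_card_filter_not (s := (Finset.univ : Finset (Fin m)))
    (p := fun i => x i = 0)
  rw [Finset.card_univ, Fintype.card_fin] at h
  have h2 : cnt x 1 = (Finset.univ.filter fun a => ¬ x a = 0).card := by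
    unfold cnt
    congr 1
    apply Finset.filter_congr
    intro i _
    rcases fin2_cases (x i) with h | h <;> simp [h]
  rw [h2]
  exact h

lemma AS_two_fin (m : ℕ) :
    Fintype.card (ASet (Fin m) (Fin m) (Fin 2)) = (2 * m).choose m := by
  have e : ASet (Fin m) (Fin m) (Fin 2) ≃
      {q : Finset (Fin m) × Finset (Fin m) // q.1.card = q.2.card} := by
    apply Equiv.subtypeEquiv ((wordTwoEquiv m).prodCongr (wordTwoEquiv m))
    intro p
    simp only [Equiv.prodCongr_apply, Prod.map_fst, Prod.map_snd]
    constructor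
    · intro h
      exact h 0
    · intro h a
      have h0 : cnt p.1 0 = cnt p.2 0 := h
      rcases fin2_cases a with ha | ha <;> subst ha
      · exact h0
      · have h1 := cnt_one m p.1
        have h2 := cnt_one m p.2
        omega
  rw [Fintype.card_congr e, Fintype.card_subtype, Finset.card_filter]
  exact (pairsum m (fun _ => 1)).trans (vandermonde_sq m)

section Split

variable {ι κ₁ κ₂ : Type*} [Fintype ι] [DecidableEq ι]

def blockset (x : ι → κ₁ ⊕ κ₂) : Finset ι :=
  Finset.univ.filter fun i => (x i).isLeft

lemma isLeft_of_mem {x : ι → κ₁ ⊕ κ₂} {S : Finset ι} (h : blockset x = S)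
    (j : ↥S) : (x j).isLeft := by
  subst h
  exact (Finset.mem_filter.1 j.2).2

lemma isRight_of_mem {x : ι → κ₁ ⊕ κ₂} {S : Finset ι} (h : blockset x = S)
    (j : ↥(Sᶜ)) : (x j).isRight := by
  subst h
  have hj := Finset.mem_compl.1 j.2
  simp only [blockset, Finset.mem_filter, Finset.mem_univ, true_and] at hj
  exact Sum.not_isLeft.1 hj

def restL (x : ι → κ₁ ⊕ κ₂) (S : Finset ι) (h : blockset x = S) : ↥S → κ₁ :=
  fun j => (x j).getLeft (isLeft_of_mem h j)

def restR (x : ι → κ₁ ⊕ κ₂) (S : Finset ι) (h : blockset x = S) : ↥(Sᶜ) → κ₂ :=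
  fun j => (x j).getRight (isRight_of_mem h j)

lemma restL_spec (x : ι → κ₁ ⊕ κ₂) (S : Finset ι) (h : blockset x = S) (j : ↥S) :
    x j = Sum.inl (restL x S h j) := (Sum.inl_getLeft _ _).symm

lemma restR_spec (x : ι → κ₁ ⊕ κ₂) (S : Finset ι) (h : blockset x = S) (j : ↥(Sᶜ)) :
    x j = Sum.inr (restR x S h j) := (Sum.inr_getRight _ _).symm

def glue (S : Finset ι) (f : ↥S → κ₁) (g : ↥(Sᶜ) → κ₂) : ι → κ₁ ⊕ κ₂ :=
  fun i => if h : i ∈ S then Sum.inl (f ⟨i, h⟩) else Sum.inr (g ⟨i, Finset.mem_compl.2 h⟩)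

lemma blockset_glue (S : Finset ι) (f : ↥S → κ₁) (g : ↥(Sᶜ) → κ₂) :
    blockset (glue S f g) = S := by
  ext i
  simp only [blockset, Finset.mem_filter, Finset.mem_univ, true_and, glue]
  by_cases h : i ∈ S <;> refine Finset.mem_filter.trans ?_ <;> simp [h]

lemma glue_spec_l (S : Finset ι) (f : ↥S → κ₁) (g : ↥(Sᶜ) → κ₂) (j : ↥S) :
    glue S f g j = Sum.inl (f j) := by
  simp only [glue, dif_pos j.2]

lemma glue_spec_r (S : Finset ι) (f : ↥S → κ₁) (g : ↥(Sᶜ) → κ₂) (j : ↥(Sᶜ)) :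
    glue S f g j = Sum.inr (g j) := by
  have hj : ¬ (j : ι) ∈ S := Finset.mem_compl.1 j.2
  simp only [glue, dif_neg hj]

lemma glue_rest (x : ι → κ₁ ⊕ κ₂) (S : Finset ι) (h : blockset x = S) :
    glue S (restL x S h) (restR x S h) = x := by
  funext i
  by_cases hi : i ∈ S
  · rw [show i = ((⟨i, hi⟩ : ↥S) : ι) from rfl, glue_spec_l, restL_spec x S h]
  · have hi' : i ∈ Sᶜ := Finset.mem_compl.2 hi
    rw [show i = ((⟨i, hi'⟩ : ↥(Sᶜ)) : ι) from rfl, glue_spec_r, restR_spec x S h]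

lemma restL_glue (S : Finset ι) (f : ↥S → κ₁) (g : ↥(Sᶜ) → κ₂)
    (h : blockset (glue S f g) = S) : restL (glue S f g) S h = f := by
  funext j
  apply Sum.inl_injective
  rw [← restL_spec _ _ h j, glue_spec_l]

lemma restR_glue (S : Finset ι) (f : ↥S → κ₁) (g : ↥(Sᶜ) → κ₂)
    (h : blockset (glue S f g) = S) : restR (glue S f g) S h = g := by
  funext j
  apply Sum.inr_injective
  rw [← restR_spec _ _ h j, glue_spec_r]

end Split

section Split2

variable {ι κ₁ κ₂ : Type*} [Fintype ι] [DecidableEq ι]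
  [DecidableEq κ₁] [DecidableEq κ₂]

lemma cnt_inl (x : ι → κ₁ ⊕ κ₂) {S : Finset ι} (h : blockset x = S)
    (f : ↥S → κ₁) (hf : ∀ j : ↥S, x j = Sum.inl (f j)) (a : κ₁) :
    cnt f a = cnt x (Sum.inl a) := by
  rw [cnt_eq_card, cnt_eq_card]
  apply Fintype.card_congr
  exact
    { toFun := fun j => ⟨j.1.1, by rw [hf j.1, j.2]⟩
      invFun := fun i =>
        have hmem : i.1 ∈ S := by
          rw [← h]
          simp only [blockset, Finset.mem_filter, Finset.mem_univ, true_and, i.2, Sum.isLeft_inl]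
        ⟨⟨i.1, hmem⟩, Sum.inl_injective ((hf ⟨i.1, hmem⟩).symm.trans i.2)⟩
      left_inv := fun j => by ext; rfl
      right_inv := fun i => by ext; rfl }

lemma cnt_inr (x : ι → κ₁ ⊕ κ₂) {S : Finset ι} (h : blockset x = S)
    (g : ↥(Sᶜ) → κ₂) (hg : ∀ j : ↥(Sᶜ), x j = Sum.inr (g j)) (b : κ₂) :
    cnt g b = cnt x (Sum.inr b) := by
  rw [cnt_eq_card, cnt_eq_card]
  apply Fintype.card_congr
  exact
    { toFun := fun j => ⟨j.1.1, by rw [hg j.1, j.2]⟩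
      invFun := fun i =>
        have hmem : i.1 ∈ Sᶜ := by
          rw [Finset.mem_compl, ← h]
          simp [blockset, i.2]
        ⟨⟨i.1, hmem⟩, Sum.inr_injective ((hg ⟨i.1, hmem⟩).symm.trans i.2)⟩
      left_inv := fun j => by ext; rfl
      right_inv := fun i => by ext; rfl }

def fiberEquiv (S₁ S₂ : Finset ι) :
    {p : ASet ι ι (κ₁ ⊕ κ₂) // blockset p.1.1 = S₁ ∧ blockset p.1.2 = S₂} ≃
      ASet ↥S₁ ↥S₂ κ₁ × ASet ↥(S₁ᶜ) ↥(S₂ᶜ) κ₂ where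
  toFun p :=
    (⟨(restL p.1.1.1 S₁ p.2.1, restL p.1.1.2 S₂ p.2.2), fun a => by
        rw [cnt_inl _ p.2.1 _ (restL_spec _ _ p.2.1) a,
          cnt_inl _ p.2.2 _ (restL_spec _ _ p.2.2) a]
        exact p.1.2 (Sum.inl a)⟩,
     ⟨(restR p.1.1.1 S₁ p.2.1, restR p.1.1.2 S₂ p.2.2), fun b => by
        rw [cnt_inr _ p.2.1 _ (restR_spec _ _ p.2.1) b,
          cnt_inr _ p.2.2 _ (restR_spec _ _ p.2.2) b]
        exact p.1.2 (Sum.inr b)⟩)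
  invFun uv :=
    ⟨⟨(glue S₁ uv.1.1.1 uv.2.1.1, glue S₂ uv.1.1.2 uv.2.1.2), fun c => by
        cases c with
        | inl a =>
          rw [← cnt_inl _ (blockset_glue S₁ _ _) _ (glue_spec_l S₁ _ _) a,
            ← cnt_inl _ (blockset_glue S₂ _ _) _ (glue_spec_l S₂ _ _) a]
          exact uv.1.2 a
        | inr b =>
          rw [← cnt_inr _ (blockset_glue S₁ _ _) _ (glue_spec_r S₁ _ _) b,
            ← cnt_inr _ (blockset_glue S₂ _ _) _ (glue_spec_r S₂ _ _) b]
          exact uv.2.2 b⟩,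
      blockset_glue S₁ _ _, blockset_glue S₂ _ _⟩
  left_inv p := by
    apply Subtype.ext
    apply Subtype.ext
    exact Prod.ext (glue_rest _ _ p.2.1) (glue_rest _ _ p.2.2)
  right_inv uv := by
    refine Prod.ext (Subtype.ext (Prod.ext ?_ ?_)) (Subtype.ext (Prod.ext ?_ ?_))
    · exact restL_glue S₁ uv.1.1.1 uv.2.1.1 (blockset_glue _ _ _)
    · exact restL_glue S₂ uv.1.1.2 uv.2.1.2 (blockset_glue _ _ _)
    · exact restR_glue S₁ uv.1.1.1 uv.2.1.1 (blockset_glue _ _ _)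
    · exact restR_glue S₂ uv.1.1.2 uv.2.1.2 (blockset_glue _ _ _)

end Split2

lemma AS_split (n : ℕ) (κ₁ κ₂ : Type) [Fintype κ₁] [Fintype κ₂]
    [DecidableEq κ₁] [DecidableEq κ₂] :
    Fintype.card (ASet (Fin n) (Fin n) (κ₁ ⊕ κ₂)) =
      ∑ q : Finset (Fin n) × Finset (Fin n),
        Fintype.card (ASet ↥q.1 ↥q.2 κ₁) * Fintype.card (ASet ↥(q.1ᶜ) ↥(q.2ᶜ) κ₂) := by
  classical
  rw [Fintype.card_congr (Equiv.sigmaFiberEquiv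
    (fun p : ASet (Fin n) (Fin n) (κ₁ ⊕ κ₂) => (blockset p.1.1, blockset p.1.2))).symm,
    Fintype.card_sigma]
  refine Finset.sum_congr rfl fun q _ => ?_
  rw [← Fintype.card_prod]
  apply Fintype.card_congr
  exact (Equiv.subtypeEquivRight (fun p => by rw [Prod.ext_iff])).trans (fiberEquiv q.1 q.2)

def abelianSquares' (k n : ℕ) : ℕ :=
  Fintype.card {p : (Fin n → Fin k) × (Fin n → Fin k) //
    ∀ a : Fin k,
      (Finset.univ.filter fun i => p.1 i = a).card =
      (Finset.univ.filter fun i => p.2 i = a).card}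

set_option maxHeartbeats 2000000 in
theorem abelianSquares_four' (n : ℕ) :
    abelianSquares' 4 n =
      ∑ i ∈ Finset.range (n + 1),
        (n.choose i) ^ 2 * (2 * i).choose i * (2 * n - 2 * i).choose (n - i) := by
  have h0 : abelianSquares' 4 n = Fintype.card (ASet (Fin n) (Fin n) (Fin 2 ⊕ Fin 2)) := by
    refine Eq.trans ?_ (AS_congr (Equiv.refl (Fin n)) (Equiv.refl (Fin n))
      ((finCongr (show (4:ℕ) = 2 + 2 by norm_num)).trans (finSumFinEquiv (m := 2) (n := 2)).symm))
    exact (card_irrel _ _).trans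
      (Fintype.card_congr (Equiv.subtypeEquiv (Equiv.refl _) (fun p => by simp [cnt]; exact Iff.rfl)))
  rw [h0, AS_split n (Fin 2) (Fin 2)]
  have hterm : ∀ q : Finset (Fin n) × Finset (Fin n),
      Fintype.card (ASet ↥q.1 ↥q.2 (Fin 2)) * Fintype.card (ASet ↥(q.1ᶜ) ↥(q.2ᶜ) (Fin 2))
        = if q.1.card = q.2.card
            then (fun i => (2 * i).choose i * (2 * (n - i)).choose (n - i)) q.1.card
            else 0 := by
    intro q
    by_cases h : q.1.card = q.2.card
    · rw [if_pos h]
      have c1 : Fintype.card ↥q.1 = q.1.card := Fintype.card_coe _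
      have c2 : Fintype.card ↥q.2 = q.1.card := by rw [Fintype.card_coe, h]
      have c3 : Fintype.card ↥(q.1ᶜ) = n - q.1.card := by
        rw [Fintype.card_coe, Finset.card_compl, Fintype.card_fin]
      have c4 : Fintype.card ↥(q.2ᶜ) = n - q.1.card := by
        rw [Fintype.card_coe, Finset.card_compl, Fintype.card_fin, h]
      have t1 : Fintype.card (ASet ↥q.1 ↥q.2 (Fin 2)) = (2 * q.1.card).choose q.1.card :=
        (AS_congr (Fintype.equivFinOfCardEq c1) (Fintype.equivFinOfCardEq c2)
          (Equiv.refl (Fin 2))).trans (AS_two_fin _)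
      have t2 : Fintype.card (ASet ↥(q.1ᶜ) ↥(q.2ᶜ) (Fin 2))
          = (2 * (n - q.1.card)).choose (n - q.1.card) :=
        (AS_congr (Fintype.equivFinOfCardEq c3) (Fintype.equivFinOfCardEq c4)
          (Equiv.refl (Fin 2))).trans (AS_two_fin _)
      rw [t1, t2]
    · rw [if_neg h, AS_eq_zero (by simpa [Fintype.card_coe] using h), zero_mul]
  rw [Finset.sum_congr rfl fun q _ => hterm q]
  refine (pairsum n (fun i => (2 * i).choose i * (2 * (n - i)).choose (n - i))).trans ?_
  refine Finset.sum_congr rfl fun i hi => ?_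
  have hin : i ≤ n := by have := Finset.mem_range.1 hi; omega
  have h2 : 2 * (n - i) = 2 * n - 2 * i := by omega
  rw [h2]
  ring

theorem abelianSquares_four (n : ℕ) :
    abelianSquares 4 n =
      ∑ i ∈ Finset.range (n + 1),
        (n.choose i) ^ 2 * (2 * i).choose i * (2 * n - 2 * i).choose (n - i) := by
  have h : abelianSquares 4 n = abelianSquares' 4 n := card_irrel _ _
  rw [h, abelianSquares_four' n]
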